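/- The limit as n → ∞ of (1/n)·|{M : 2 ≤ M ≤ n, both M and M−1 are squarefree}| exists and equals the convergent infinite product ∏_{p prime} (1 − 2/p²). -/

import Mathlib

open scoped Classical
open Filter Finset Topology

section Aux

def Sz (z : ℕ) : Finset ℕ := (range (z+1)).filter Nat.Prime
def cnd (q M : ℕ) : Prop := M % q ≠ 0 ∧ M % q ≠ 1
instance (q M : ℕ) : Decidable (cnd q M) := by unfold cnd; infer_instance
lemma cnd_of_modEq {q M N : ℕ} (h : M ≡ N [MOD q]) : cnd q M ↔ cnd q N := by
  unfold cnd; unfold Nat.ModEq at h; rw [h]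

lemma crt_count (s : ℕ → ℕ) (T : Finset ℕ) (hcop : (T : Set ℕ).Pairwise (Function.onFun Nat.Coprime s))
    (hpos : ∀ q ∈ T, 0 < s q) :
    ((range (∏ q ∈ T, s q)).filter (fun M => ∀ q ∈ T, cnd (s q) M)).card
      = ∏ q ∈ T, ((range (s q)).filter (cnd (s q))).card := by
  induction T using Finset.induction_on with
  | empty => simp
  | @insert a T ha ih =>
    have hcop' : (T : Set ℕ).Pairwise (Function.onFun Nat.Coprime s) :=
      hcop.mono (Finset.coe_subset.mpr (Finset.subset_insert a T))
    have hpos' : ∀ q ∈ T, 0 < s q := fun q hq => hpos q (mem_insert_of_mem hq)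
    have hA : 0 < s a := hpos a (mem_insert_self a T)
    have hAB : (s a).Coprime (∏ q ∈ T, s q) := by
      apply Nat.Coprime.prod_right
      intro q hq
      exact hcop (by simp) (by simp [hq]) (fun h => ha (h ▸ hq))
    have hB : 0 < ∏ q ∈ T, s q := Finset.prod_pos hpos'
    set A := s a with hAdef
    set B := ∏ q ∈ T, s q with hBdef
    rw [Finset.prod_insert ha, Finset.prod_insert ha]
    have key : ((range (A * B)).filter (fun M => ∀ q ∈ insert a T, cnd (s q) M)).card
        = (((range A) ×ˢ (range B)).filter
            (fun x => cnd A x.1 ∧ ∀ q ∈ T, cnd (s q) x.2)).card := by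
      apply Finset.card_bij' (fun M _ => (M % A, M % B))
        (fun x _ => Nat.chineseRemainder hAB x.1 x.2)
      · intro M hM
        simp only [mem_filter, mem_range] at hM
        obtain ⟨hMlt, hMc⟩ := hM
        simp only [mem_filter, mem_product, mem_range]
        refine ⟨⟨Nat.mod_lt _ hA, Nat.mod_lt _ hB⟩, ?_, ?_⟩
        · rw [cnd_of_modEq (Nat.mod_modEq M A)]
          exact hMc a (mem_insert_self a T)
        · intro q hq
          have hdvd : s q ∣ B := Finset.dvd_prod_of_mem s hq
          rw [cnd_of_modEq ((Nat.mod_modEq M B).of_dvd hdvd)]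
          exact hMc q (mem_insert_of_mem hq)
      · intro x hx
        simp only [mem_filter, mem_product, mem_range] at hx
        obtain ⟨⟨hx1, hx2⟩, hc1, hc2⟩ := hx
        set k := Nat.chineseRemainder hAB x.1 x.2
        have hk1 : (k : ℕ) ≡ x.1 [MOD A] := k.2.1
        have hk2 : (k : ℕ) ≡ x.2 [MOD B] := k.2.2
        simp only [mem_filter, mem_range]
        constructor
        · exact Nat.chineseRemainder_lt_mul hAB x.1 x.2 hA.ne' hB.ne'
        · intro q hq
          rcases mem_insert.mp hq with rfl | hq'
          · rw [cnd_of_modEq hk1]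
            exact hc1
          · have hdvd : s q ∣ B := Finset.dvd_prod_of_mem s hq'
            rw [cnd_of_modEq (hk2.of_dvd hdvd)]
            exact hc2 q hq'
      · intro M hM
        simp only [mem_filter, mem_range] at hM
        have h1 : (Nat.chineseRemainder hAB (M % A) (M % B) : ℕ) ≡ M [MOD A * B] := by
          rw [← Nat.modEq_and_modEq_iff_modEq_mul hAB]
          exact ⟨(Nat.chineseRemainder hAB (M % A) (M % B)).2.1.trans (Nat.mod_modEq M A),
                 (Nat.chineseRemainder hAB (M % A) (M % B)).2.2.trans (Nat.mod_modEq M B)⟩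
        have h2 := Nat.chineseRemainder_lt_mul hAB (M % A) (M % B) hA.ne' hB.ne'
        unfold Nat.ModEq at h1
        rwa [Nat.mod_eq_of_lt h2, Nat.mod_eq_of_lt hM.1] at h1
      · intro x hx
        simp only [mem_filter, mem_product, mem_range] at hx
        set k := Nat.chineseRemainder hAB x.1 x.2
        have hk1 : (k : ℕ) % A = x.1 % A := k.2.1
        have hk2 : (k : ℕ) % B = x.2 % B := k.2.2
        rw [hk1, hk2, Nat.mod_eq_of_lt hx.1.1, Nat.mod_eq_of_lt hx.1.2]
    have hsplit : ((range A ×ˢ range B).filter (fun x => cnd A x.1 ∧ ∀ q ∈ T, cnd (s q) x.2))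
        = ((range A).filter (cnd A)) ×ˢ ((range B).filter (fun y => ∀ q ∈ T, cnd (s q) y)) := by
      ext ⟨x, y⟩
      simp only [mem_filter, mem_product]
      tauto
    rw [key, hsplit, Finset.card_product, ih hcop' hpos']

lemma cnd_count_base (q : ℕ) (hq : 2 ≤ q) : ((range q).filter (cnd q)).card = q - 2 := by
  have h : (range q).filter (cnd q) = Ico 2 q := by
    ext M
    simp only [cnd, mem_filter, mem_range, mem_Ico]
    constructor
    · rintro ⟨h, h0, h1⟩
      rw [Nat.mod_eq_of_lt h] at h0 h1
      omega
    · rintro ⟨h2, h⟩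
      rw [Nat.mod_eq_of_lt h]
      omega
  rw [h, Nat.card_Ico]

def Pz (z : ℕ) : ℕ := ∏ p ∈ Sz z, p^2
def Cz (z : ℕ) : ℕ := ∏ p ∈ Sz z, (p^2 - 2)
def Bz (z M : ℕ) : Prop := ∀ p ∈ Sz z, cnd (p^2) M
instance (z M : ℕ) : Decidable (Bz z M) := by unfold Bz; infer_instance

lemma Pz_pos (z : ℕ) : 0 < Pz z :=
  Finset.prod_pos fun p hp => pow_pos ((Finset.mem_filter.mp hp).2.pos) 2

lemma Cz_le_Pz (z : ℕ) : Cz z ≤ Pz z :=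
  Finset.prod_le_prod' fun p _ => Nat.sub_le _ _

lemma sq_dvd_Pz {z p : ℕ} (hp : p ∈ Sz z) : p^2 ∣ Pz z := Finset.dvd_prod_of_mem _ hp

lemma count_range_Pz (z : ℕ) : ((range (Pz z)).filter (Bz z)).card = Cz z := by
  have h := crt_count (·^2) (Sz z) ?cop ?pos
  case cop =>
    intro p hp q hq hne
    simp only [Sz, coe_filter, Set.mem_setOf_eq, mem_range] at hp hq
    exact Nat.Coprime.pow 2 2 ((Nat.coprime_primes hp.2 hq.2).mpr hne)
  case pos =>
    intro q hq
    exact pow_pos ((Finset.mem_filter.mp hq).2.pos) 2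
  have h2 : ((range (Pz z)).filter (Bz z)).card
      = ∏ q ∈ Sz z, ((range (q^2)).filter (cnd (q^2))).card := by
    rw [Pz]; exact h
  rw [h2, Cz]
  apply Finset.prod_congr rfl
  intro p hp
  exact cnd_count_base _ ((Finset.mem_filter.mp hp).2.two_le.trans (Nat.le_self_pow two_ne_zero p))

lemma cnd_add_mul {q x c P : ℕ} (h : q ∣ P) : cnd q (x + c * P) ↔ cnd q x := by
  obtain ⟨m, rfl⟩ := h
  unfold cnd
  rw [show x + c * (q * m) = x + (c * m) * q by ring, Nat.add_mul_mod_self_right]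

lemma Bz_add_mul (z : ℕ) {x c : ℕ} : Bz z (x + c * Pz z) ↔ Bz z x := by
  unfold Bz
  exact forall₂_congr fun p hp => cnd_add_mul (sq_dvd_Pz hp)

lemma count_block (z k : ℕ) :
    ((Ico (k * Pz z) ((k+1) * Pz z)).filter (Bz z)).card = Cz z := by
  rw [← count_range_Pz z]
  apply Finset.card_bij' (fun M _ => M - k * Pz z) (fun x _ => x + k * Pz z)
  · intro M hM
    simp only [mem_filter, mem_Ico] at hM ⊢
    obtain ⟨⟨h1, h2⟩, h3⟩ := hM
    have he : (k+1) * Pz z = k * Pz z + Pz z := by ring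
    have hx : M = (M - k * Pz z) + k * Pz z := by omega
    refine ⟨by simp only [mem_range]; omega, ?_⟩
    rw [← Bz_add_mul z (c := k), ← hx]
    exact h3
  · intro x hx
    simp only [mem_filter, mem_range, mem_Ico] at hx ⊢
    have he : (k+1) * Pz z = k * Pz z + Pz z := by ring
    exact ⟨by omega, (Bz_add_mul z).mpr hx.2⟩
  · intro M hM; simp only [mem_filter, mem_Ico] at hM; omega
  · intro x _; omega

lemma count_range_mul (z k : ℕ) :
    ((range (k * Pz z)).filter (Bz z)).card = k * Cz z := by
  induction k with
  | zero => simp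
  | succ k ih =>
    have hsplit : range ((k+1) * Pz z)
        = range (k * Pz z) ∪ Ico (k * Pz z) ((k+1) * Pz z) := by
      rw [range_eq_Ico, range_eq_Ico, Finset.Ico_union_Ico_eq_Ico]
      · exact Nat.zero_le _
      · exact Nat.mul_le_mul_right _ (Nat.le_succ k)
    rw [hsplit, Finset.filter_union, Finset.card_union_of_disjoint, ih, count_block]
    · ring
    · exact Finset.disjoint_filter_filter (by rw [range_eq_Ico]; exact Finset.Ico_disjoint_Ico_consecutive 0 _ _)

lemma A_upper (z n : ℕ) :
    ((Icc 2 n).filter (Bz z)).card ≤ (n / Pz z + 1) * Cz z := by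
  rw [← count_range_mul z]
  apply Finset.card_le_card
  apply Finset.filter_subset_filter
  intro M hM
  simp only [mem_Icc] at hM
  simp only [mem_range]
  have h1 := Nat.div_add_mod n (Pz z)
  have h2 := Nat.mod_lt n (Pz_pos z)
  have h3 : (n / Pz z + 1) * Pz z = Pz z * (n / Pz z) + Pz z := by ring
  omega

lemma A_lower (z n : ℕ) :
    (n / Pz z) * Cz z ≤ ((Icc 2 n).filter (Bz z)).card + 2 := by
  rw [← count_range_mul z]
  calc ((range (n / Pz z * Pz z)).filter (Bz z)).card
      ≤ (insert 0 (insert 1 ((Icc 2 n).filter (Bz z)))).card := by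
        apply Finset.card_le_card
        intro M hM
        simp only [mem_filter, mem_range] at hM
        have hle : n / Pz z * Pz z ≤ n := Nat.div_mul_le_self n _
        simp only [Finset.mem_insert, mem_filter, mem_Icc]
        rcases Nat.lt_or_ge M 2 with h2 | h2
        · interval_cases M <;> simp
        · exact Or.inr (Or.inr ⟨⟨h2, by omega⟩, hM.2⟩)
    _ ≤ ((Icc 2 n).filter (Bz z)).card + 2 := by
        apply le_trans (Finset.card_insert_le _ _)
        have := Finset.card_insert_le 1 ((Icc 2 n).filter (Bz z))
        omega

lemma Q_le_A (z n : ℕ) :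
    ((Icc 2 n).filter (fun M => Squarefree M ∧ Squarefree (M - 1))).card
      ≤ ((Icc 2 n).filter (Bz z)).card := by
  apply Finset.card_le_card
  intro M hM
  simp only [mem_filter, mem_Icc] at hM ⊢
  obtain ⟨hMn, hsf1, hsf2⟩ := hM
  refine ⟨hMn, fun p hp => ?_⟩
  have hprime : p.Prime := (Finset.mem_filter.mp hp).2
  constructor
  · intro h0
    have hdvd : p * p ∣ M := by
      rw [← pow_two]
      exact Nat.dvd_of_mod_eq_zero h0
    exact hprime.not_isUnit (hsf1 p hdvd)
  · intro h1
    have hdvd : p * p ∣ M - 1 := by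
      rw [← pow_two]
      have := Nat.div_add_mod M (p^2)
      exact ⟨M / p^2, by omega⟩
    exact hprime.not_isUnit (hsf2 p hdvd)

lemma badSet_card (p n : ℕ) (hp : 2 ≤ p) :
    ((Icc 2 n).filter (fun M => M % p^2 = 0 ∨ M % p^2 = 1)).card ≤ 2 * (n / p^2) := by
  have hq : 1 < p^2 := by nlinarith
  calc ((Icc 2 n).filter (fun M => M % p^2 = 0 ∨ M % p^2 = 1)).card
      ≤ (((Icc 1 (n / p^2)).image (· * p^2)) ∪ ((Icc 1 (n / p^2)).image (· * p^2 + 1))).card := by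
        apply Finset.card_le_card
        intro M hM
        simp only [mem_filter, mem_Icc] at hM
        obtain ⟨⟨h2, hn⟩, hcase⟩ := hM
        have hdm := Nat.div_add_mod M (p^2)
        have hcomm : M / p^2 * p^2 = p^2 * (M / p^2) := Nat.mul_comm _ _
        rcases hcase with h0 | h1
        · apply Finset.mem_union_left
          simp only [Finset.mem_image, mem_Icc]
          refine ⟨M / p^2, ⟨?_, Nat.div_le_div_right hn⟩, by omega⟩
          rcases Nat.eq_zero_or_pos (M / p^2) with h | h
          · exfalso; rw [h, Nat.mul_zero, Nat.zero_add] at hdm; omega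
          · exact h
        · apply Finset.mem_union_right
          simp only [Finset.mem_image, mem_Icc]
          refine ⟨M / p^2, ⟨?_, ?_⟩, by omega⟩
          · rcases Nat.eq_zero_or_pos (M / p^2) with h | h
            · exfalso; rw [h, Nat.mul_zero, Nat.zero_add] at hdm; omega
            · exact h
          · rw [Nat.le_div_iff_mul_le (by omega)]
            omega
    _ ≤ 2 * (n / p^2) := by
        apply le_trans (Finset.card_union_le _ _)
        have h1 := Finset.card_image_le (s := Icc 1 (n / p^2)) (f := (· * p^2))
        have h2 := Finset.card_image_le (s := Icc 1 (n / p^2)) (f := (· * p^2 + 1))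
        rw [Nat.card_Icc] at h1 h2
        omega

lemma A_le_Q_add (z n : ℕ) :
    ((Icc 2 n).filter (Bz z)).card
      ≤ ((Icc 2 n).filter (fun M => Squarefree M ∧ Squarefree (M - 1))).card
        + ∑ p ∈ (Icc (z+1) n).filter Nat.Prime, 2 * (n / p^2) := by
  have get : ∀ N : ℕ, 1 ≤ N → N ≤ n → ¬ Squarefree N →
      ∃ p, Nat.Prime p ∧ p^2 ∣ N ∧ p ≤ n := by
    intro N h1 h2' hNsf
    rw [Nat.squarefree_iff_prime_squarefree] at hNsf
    push_neg at hNsf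
    obtain ⟨p, hp, hdvd⟩ := hNsf
    have hdvd2 : p^2 ∣ N := by rwa [pow_two]
    have hple : p^2 ≤ N := Nat.le_of_dvd (by omega) hdvd2
    have hp2 : 2 ≤ p := hp.two_le
    exact ⟨p, hp, hdvd2, by nlinarith⟩
  have hsub : (Icc 2 n).filter (Bz z) \ ((Icc 2 n).filter (fun M => Squarefree M ∧ Squarefree (M - 1))) ⊆
      ((Icc (z+1) n).filter Nat.Prime).biUnion
        (fun p => (Icc 2 n).filter (fun M => M % p^2 = 0 ∨ M % p^2 = 1)) := by
    intro M hM
    simp only [Finset.mem_sdiff, mem_filter, mem_Icc, not_and] at hM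
    obtain ⟨⟨⟨h2, hn⟩, hB⟩, hnf⟩ := hM
    have hnf' : ¬ (Squarefree M ∧ Squarefree (M - 1)) := by tauto
    rw [not_and_or] at hnf'
    simp only [Finset.mem_biUnion, mem_filter, mem_Icc]
    rcases hnf' with hM1 | hM2
    · obtain ⟨p, hp, hdvd, hn'⟩ := get M (by omega) hn hM1
      have hq1 : 1 < p^2 := by have := hp.two_le; nlinarith
      have h0 : M % p^2 = 0 := Nat.mod_eq_zero_of_dvd hdvd
      have hz : z + 1 ≤ p := by
        by_contra hlt
        push_neg at hlt
        have hmem : p ∈ Sz z := by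
          simp only [Sz, mem_filter, mem_range]
          exact ⟨by omega, hp⟩
        exact (hB p hmem).1 h0
      exact ⟨p, ⟨⟨hz, hn'⟩, hp⟩, ⟨h2, hn⟩, Or.inl h0⟩
    · obtain ⟨p, hp, hdvd, hn'⟩ := get (M-1) (by omega) (by omega) hM2
      have hq1 : 1 < p^2 := by have := hp.two_le; nlinarith
      obtain ⟨c, hc⟩ := hdvd
      have h1 : M % p^2 = 1 := by
        have hcomm : c * p^2 = p^2 * c := Nat.mul_comm _ _
        have hM' : M = 1 + c * p^2 := by omega
        rw [hM', Nat.add_mul_mod_self_right, Nat.mod_eq_of_lt hq1]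
      have hz : z + 1 ≤ p := by
        by_contra hlt
        push_neg at hlt
        have hmem : p ∈ Sz z := by
          simp only [Sz, mem_filter, mem_range]
          exact ⟨by omega, hp⟩
        exact (hB p hmem).2 h1
      exact ⟨p, ⟨⟨hz, hn'⟩, hp⟩, ⟨h2, hn⟩, Or.inr h1⟩
  calc ((Icc 2 n).filter (Bz z)).card
      ≤ (((Icc 2 n).filter (Bz z)) \ ((Icc 2 n).filter (fun M => Squarefree M ∧ Squarefree (M - 1)))).card
        + ((Icc 2 n).filter (fun M => Squarefree M ∧ Squarefree (M - 1))).card :=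
        Finset.card_le_card_sdiff_add_card
    _ ≤ ((Icc 2 n).filter (fun M => Squarefree M ∧ Squarefree (M - 1))).card
        + ∑ p ∈ (Icc (z+1) n).filter Nat.Prime, 2 * (n / p^2) := by
        rw [Nat.add_comm]
        apply Nat.add_le_add_left
        calc (((Icc 2 n).filter (Bz z)) \ ((Icc 2 n).filter (fun M => Squarefree M ∧ Squarefree (M - 1)))).card
            ≤ (((Icc (z+1) n).filter Nat.Prime).biUnion
                (fun p => (Icc 2 n).filter (fun M => M % p^2 = 0 ∨ M % p^2 = 1))).card :=
              Finset.card_le_card hsub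
          _ ≤ ∑ p ∈ (Icc (z+1) n).filter Nat.Prime,
                ((Icc 2 n).filter (fun M => M % p^2 = 0 ∨ M % p^2 = 1)).card :=
              Finset.card_biUnion_le
          _ ≤ ∑ p ∈ (Icc (z+1) n).filter Nat.Prime, 2 * (n / p^2) := by
              apply Finset.sum_le_sum
              intro p hp
              exact badSet_card p n (Finset.mem_filter.mp hp).2.two_le

noncomputable def Dz (z : ℕ) : ℝ := ∏ p ∈ Sz z, (1 - 2/(p:ℝ)^2)

lemma Sz_two_le {z p : ℕ} (hp : p ∈ Sz z) : 2 ≤ p := (Finset.mem_filter.mp hp).2.two_le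

lemma Dz_eq (z : ℕ) : Dz z = (Cz z : ℝ) / (Pz z : ℝ) := by
  rw [Dz, Cz, Pz, Nat.cast_prod, Nat.cast_prod, ← Finset.prod_div_distrib]
  apply Finset.prod_congr rfl
  intro p hp
  have hp2 : 2 ≤ p := Sz_two_le hp
  have h2 : (2:ℕ) ≤ p^2 := by nlinarith
  have hne : ((p:ℝ))^2 ≠ 0 := by positivity
  rw [Nat.cast_sub h2]
  push_cast
  field_simp

lemma E_bound (z n : ℕ) (hz : 1 ≤ z) :
    ((∑ p ∈ (Icc (z+1) n).filter Nat.Prime, 2 * (n / p^2) : ℕ) : ℝ) ≤ 2 * n / z := by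
  have hzR : (0:ℝ) < z := by exact_mod_cast hz
  calc ((∑ p ∈ (Icc (z+1) n).filter Nat.Prime, 2 * (n / p^2) : ℕ) : ℝ)
      = ∑ p ∈ (Icc (z+1) n).filter Nat.Prime, ((2 * (n / p^2) : ℕ) : ℝ) := Nat.cast_sum _ _
    _ ≤ ∑ p ∈ (Icc (z+1) n).filter Nat.Prime, 2 * (n:ℝ) * ((p:ℝ)^2)⁻¹ := by
        apply Finset.sum_le_sum
        intro p hp
        have hple := Nat.cast_div_le (α := ℝ) (m := n) (n := p^2)
        push_cast at hple ⊢
        rw [mul_assoc, ← div_eq_mul_inv]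
        nlinarith
    _ ≤ ∑ k ∈ Ioc z n, 2 * (n:ℝ) * ((k:ℝ)^2)⁻¹ := by
        apply Finset.sum_le_sum_of_subset_of_nonneg
        · intro p hp
          simp only [mem_filter, mem_Icc] at hp
          simp only [mem_Ioc]
          omega
        · intro k _ _
          positivity
    _ = 2 * (n:ℝ) * ∑ k ∈ Ioc z n, ((k:ℝ)^2)⁻¹ := by rw [Finset.mul_sum]
    _ ≤ 2 * n / z := by
        rcases le_or_gt z n with h | h
        · have hb := sum_Ioc_inv_sq_le_sub (α := ℝ) (k := z) (n := n) (by omega) h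
          have hn0 : (0:ℝ) ≤ (n:ℝ)⁻¹ := by positivity
          rw [div_eq_mul_inv]
          have : (0:ℝ) ≤ 2 * (n:ℝ) := by positivity
          calc 2 * (n:ℝ) * ∑ k ∈ Ioc z n, ((k:ℝ)^2)⁻¹
              ≤ 2 * (n:ℝ) * ((z:ℝ)⁻¹ - (n:ℝ)⁻¹) := by
                apply mul_le_mul_of_nonneg_left _ this
                simpa using hb
            _ ≤ 2 * (n:ℝ) * (z:ℝ)⁻¹ := by nlinarith
        · rw [Finset.Ioc_eq_empty (by omega)]
          simp
          positivity

lemma master (z n : ℕ) (hz : 1 ≤ z) :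
    |((((Icc 2 n).filter (fun M => Squarefree M ∧ Squarefree (M - 1))).card : ℝ)) - Dz z * n|
      ≤ 2 * n / z + ((Pz z : ℝ) + 2) := by
  set Q := ((Icc 2 n).filter (fun M => Squarefree M ∧ Squarefree (M - 1))).card with hQdef
  set A := ((Icc 2 n).filter (Bz z)).card with hAdef
  set k := n / Pz z with hkdef
  have hkP : k * Pz z ≤ n := Nat.div_mul_le_self _ _
  have hkP2 : n < k * Pz z + Pz z := by
    have h1 : Pz z * k + n % Pz z = n := Nat.div_add_mod n (Pz z)
    have h2 := Nat.mod_lt n (Pz_pos z)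
    have h3 : Pz z * k = k * Pz z := Nat.mul_comm _ _
    omega
  have hA1 : (A:ℝ) ≤ ((k:ℝ)+1) * (Cz z : ℝ) := by exact_mod_cast A_upper z n
  have hA2 : (k:ℝ) * (Cz z : ℝ) ≤ (A:ℝ) + 2 := by exact_mod_cast A_lower z n
  have hQ1 : (Q:ℝ) ≤ (A:ℝ) := by exact_mod_cast Q_le_A z n
  have hQ2 : (A:ℝ) ≤ (Q:ℝ) + 2 * n / z := by
    have h := A_le_Q_add z n
    have h' : (A:ℝ) ≤ (Q:ℝ) + ((∑ p ∈ (Icc (z+1) n).filter Nat.Prime, 2 * (n / p^2) : ℕ) : ℝ) := by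
      exact_mod_cast h
    exact h'.trans (by linarith [E_bound z n hz])
  have hPpos : (0:ℝ) < (Pz z : ℝ) := by exact_mod_cast Pz_pos z
  have hC0 : (0:ℝ) ≤ (Cz z : ℝ) := Nat.cast_nonneg _
  have hCP : (Cz z : ℝ) ≤ (Pz z : ℝ) := by exact_mod_cast Cz_le_Pz z
  have hkPr : (k:ℝ) * (Pz z : ℝ) ≤ n := by exact_mod_cast hkP
  have hkPr2 : (n:ℝ) < (k:ℝ) * (Pz z:ℝ) + (Pz z:ℝ) := by exact_mod_cast hkP2
  rw [Dz_eq]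
  have hlow : (k:ℝ) * (Cz z:ℝ) ≤ (Cz z:ℝ) / (Pz z:ℝ) * n := by
    rw [div_mul_eq_mul_div, le_div_iff₀ hPpos]
    nlinarith
  have hhigh : (Cz z:ℝ) / (Pz z:ℝ) * n ≤ ((k:ℝ)+1) * (Cz z:ℝ) := by
    rw [div_mul_eq_mul_div, div_le_iff₀ hPpos]
    nlinarith
  have h2nz : (0:ℝ) ≤ 2 * n / z := by positivity
  rw [abs_le]
  constructor
  · linarith
  · linarith

lemma factor_nonneg {p : ℕ} (hp : 2 ≤ p) : (0:ℝ) ≤ 1 - 2/(p:ℝ)^2 := by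
  have hp2 : (2:ℝ) ≤ (p:ℝ) := by exact_mod_cast hp
  have h4 : (4:ℝ) ≤ (p:ℝ)^2 := by nlinarith
  have : 2/(p:ℝ)^2 ≤ 2/4 := by
    apply div_le_div_of_nonneg_left (by norm_num) (by norm_num) h4
  linarith

lemma factor_le_one {p : ℕ} (hp : 2 ≤ p) : (1 - 2/(p:ℝ)^2) ≤ 1 := by
  have hp2 : (0:ℝ) < (p:ℝ) := by positivity
  have : (0:ℝ) ≤ 2/(p:ℝ)^2 := by positivity
  linarith

lemma multipliable_part : Multipliable (fun p : Nat.Primes => (1 : ℝ) - 2 / ((p : ℕ) : ℝ) ^ 2) := by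
  set f : Nat.Primes → ℝ := fun p => (1 : ℝ) - 2 / ((p : ℕ) : ℝ) ^ 2 with hf
  have hanti : Antitone (fun s : Finset Nat.Primes => ∏ p ∈ s, f p) := by
    intro s t hst
    have heq := Finset.prod_sdiff hst (f := f)
    have h1 : ∏ p ∈ t \ s, f p ≤ 1 :=
      Finset.prod_le_one (fun p _ => factor_nonneg p.2.two_le)
        (fun p _ => factor_le_one p.2.two_le)
    have h2 : (0:ℝ) ≤ ∏ p ∈ s, f p :=
      Finset.prod_nonneg (fun p _ => factor_nonneg p.2.two_le)
    nlinarith [heq]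
  have hbdd : BddBelow (Set.range (fun s : Finset Nat.Primes => ∏ p ∈ s, f p)) := by
    refine ⟨0, ?_⟩
    rintro x ⟨s, rfl⟩
    exact Finset.prod_nonneg (fun p _ => factor_nonneg p.2.two_le)
  exact ⟨_, tendsto_atTop_ciInf hanti hbdd⟩

lemma Dz_tendsto :
    Tendsto Dz atTop (𝓝 (∏' p : Nat.Primes, ((1 : ℝ) - 2 / ((p : ℕ) : ℝ) ^ 2))) := by
  set f : Nat.Primes → ℝ := fun p => (1 : ℝ) - 2 / ((p : ℕ) : ℝ) ^ 2 with hf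
  have hm := multipliable_part
  have hp : HasProd f (∏' p, f p) := hm.hasProd
  set F : ℕ → Finset Nat.Primes := fun z => (range (z+1)).subtype Nat.Prime with hF
  have hFmono : Monotone F := fun i j hij =>
    Finset.subtype_mono (Finset.range_subset_range.mpr (by omega))
  have hFtop : Tendsto F atTop atTop := by
    apply tendsto_atTop_finset_of_monotone hFmono
    intro p
    refine ⟨p.1, Finset.mem_subtype.mpr ?_⟩
    simp
  have hcomp := hp.comp hFtop
  have hDzF : Dz = (fun s : Finset Nat.Primes => ∏ p ∈ s, f p) ∘ F := by
    funext z
    show Dz z = ∏ x ∈ (range (z+1)).subtype Nat.Prime, ((1:ℝ) - 2/((x:ℕ):ℝ)^2)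
    rw [Dz]
    apply Finset.prod_bij (fun (p : ℕ) (hp : p ∈ Sz z) =>
      (⟨p, (Finset.mem_filter.mp hp).2⟩ : Nat.Primes))
    · intro a ha
      apply Finset.mem_subtype.mpr
      exact Finset.mem_of_mem_filter _ ha
    · intro a ha b hb hab
      simpa using congrArg (fun x : Nat.Primes => (x : ℕ)) hab
    · intro b hb
      refine ⟨(b : ℕ), ?_, rfl⟩
      have hb' := Finset.mem_subtype.mp hb
      exact Finset.mem_filter.mpr ⟨hb', b.2⟩
    · intro a ha
      rfl
  rw [hDzF]
  exact hcomp

end Aux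

theorem stmt_4 :
    Multipliable (fun p : Nat.Primes => (1 : ℝ) - 2 / ((p : ℕ) : ℝ) ^ 2) ∧
    Tendsto (fun n : ℕ =>
        (((Finset.Icc 2 n).filter
          (fun M => Squarefree M ∧ Squarefree (M - 1))).card : ℝ) / n)
      atTop
      (nhds (∏' p : Nat.Primes, ((1 : ℝ) - 2 / ((p : ℕ) : ℝ) ^ 2))) := by
  refine ⟨multipliable_part, ?_⟩
  set D := ∏' p : Nat.Primes, ((1 : ℝ) - 2 / ((p : ℕ) : ℝ) ^ 2) with hD
  rw [Metric.tendsto_atTop]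
  intro ε hε
  obtain ⟨z₀, hz₀⟩ := Metric.tendsto_atTop.mp Dz_tendsto (ε/3) (by positivity)
  set z := max (max z₀ 1) ⌈6/ε⌉₊ with hzdef
  have hz1 : 1 ≤ z := le_trans (le_max_right z₀ 1) (le_max_left _ _)
  have hzz₀ : z₀ ≤ z := le_trans (le_max_left z₀ 1) (le_max_left _ _)
  have hzceil : (6/ε : ℝ) ≤ (z:ℝ) :=
    le_trans (Nat.le_ceil _) (Nat.cast_le.mpr (le_max_right _ _))
  have hzpos : (0:ℝ) < (z:ℝ) := by exact_mod_cast hz1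
  have h2z : 2/(z:ℝ) ≤ ε/3 := by
    have h6 : 6 ≤ (z:ℝ) * ε := (div_le_iff₀ hε).mp hzceil
    rw [div_le_div_iff₀ hzpos (by norm_num)]
    nlinarith
  refine ⟨⌈(3*((Pz z : ℝ)+2))/ε⌉₊ + 1, fun n hn => ?_⟩
  have hn1 : 1 ≤ n := le_trans (by omega) hn
  have hnR : (0:ℝ) < (n:ℝ) := by exact_mod_cast hn1
  have hnN : (3*((Pz z:ℝ)+2))/ε ≤ (n:ℝ) := by
    have h1 : ⌈(3*((Pz z : ℝ)+2))/ε⌉₊ ≤ n := by omega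
    exact (Nat.le_ceil _).trans (Nat.cast_le.mpr h1)
  have hPn : ((Pz z:ℝ)+2)/(n:ℝ) ≤ ε/3 := by
    rw [div_le_div_iff₀ hnR (by norm_num)]
    have h3 : 3*((Pz z:ℝ)+2) ≤ ε * n := by
      rw [div_le_iff₀ hε] at hnN
      nlinarith
    nlinarith
  set Q := ((Finset.Icc 2 n).filter (fun M => Squarefree M ∧ Squarefree (M - 1))).card with hQ
  have key : |(Q:ℝ)/(n:ℝ) - Dz z| ≤ ε/3 + ε/3 := by
    have hm := master z n hz1
    have heq : (Q:ℝ)/(n:ℝ) - Dz z = ((Q:ℝ) - Dz z * n)/(n:ℝ) := by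
      field_simp
    rw [heq, abs_div, abs_of_pos hnR, div_le_iff₀ hnR]
    calc |(Q:ℝ) - Dz z * n| ≤ 2 * n / z + ((Pz z : ℝ) + 2) := hm
      _ ≤ (ε/3 + ε/3) * n := by
          have h1 : 2 * (n:ℝ) / z = (2/(z:ℝ)) * n := by ring
          have h2 : (2/(z:ℝ)) * n ≤ (ε/3) * n := by nlinarith
          have h3 : ((Pz z:ℝ)+2) ≤ (ε/3) * n := by
            rw [div_le_iff₀ hnR] at hPn
            linarith
          nlinarith
  calc dist ((Q:ℝ)/(n:ℝ)) D ≤ dist ((Q:ℝ)/(n:ℝ)) (Dz z) + dist (Dz z) D := dist_triangle _ _ _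
    _ < (ε/3 + ε/3) + ε/3 := by
        apply add_lt_add_of_le_of_lt
        · rw [Real.dist_eq]; exact key
        · exact hz₀ z hzz₀
    _ = ε := by ring
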